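/- For every n ≥ 1, the permutation-invariant algebra g^PI, i.e. the ℂ-subspace of 2^n × 2^n complex matrices A satisfying A · U_π = U_π · A for every permutation π of Fin n, has ℂ-dimension C(n+3, 3). -/

import Mathlib

open Matrix

open Finset

/-- The permutation unitary `U_π` on `n` qubits: `(U_π)_{x,y} = 1` if `y = x ∘ π`, else `0`. -/
def permUnitary (n : ℕ) (π : Equiv.Perm (Fin n)) :
    Matrix (Fin n → Fin 2) (Fin n → Fin 2) ℂ :=
  Matrix.of fun x y => if y = x ∘ π then 1 else 0

/-- The permutation-invariant algebra `g^PI`: the ℂ-subspace of `2^n × 2^n` matrices commuting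
with every permutation unitary. -/
noncomputable def gPI (n : ℕ) : Submodule ℂ (Matrix (Fin n → Fin 2) (Fin n → Fin 2) ℂ) where
  carrier := {A | ∀ π : Equiv.Perm (Fin n), A * permUnitary n π = permUnitary n π * A}
  add_mem' := by
    intro A B hA hB π
    rw [Matrix.add_mul, Matrix.mul_add, hA π, hB π]
  zero_mem' := by
    intro π
    rw [Matrix.zero_mul, Matrix.mul_zero]
  smul_mem' := by
    intro c A hA π
    rw [Matrix.smul_mul, Matrix.mul_smul, hA π]

/- ### Auxiliary lemmas -/

/-- Two functions on `Fin n` with equicardinal fibers are conjugate by a permutation. -/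
lemma aux_exists_perm_of_fiber_card {α : Type*} [DecidableEq α] {n : ℕ} (f g : Fin n → α)
    (h : ∀ a, Fintype.card {i // f i = a} = Fintype.card {i // g i = a}) :
    ∃ σ : Equiv.Perm (Fin n), f = g ∘ σ := by
  have e : ∀ a, {i // f i = a} ≃ {i // g i = a} := fun a => Fintype.equivOfCardEq (h a)
  refine ⟨((Equiv.sigmaFiberEquiv f).symm.trans
    ((Equiv.sigmaCongrRight e).trans (Equiv.sigmaFiberEquiv g))), ?_⟩
  funext i
  simp [Equiv.sigmaFiberEquiv, Equiv.sigmaCongrRight]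
  exact ((e (f i)) ⟨i, rfl⟩).prop.symm

lemma aux_fiber_card_of_multiset_eq {α : Type*} [DecidableEq α] {n : ℕ} (f g : Fin n → α)
    (h : Multiset.map f Finset.univ.val = Multiset.map g Finset.univ.val) (a : α) :
    Fintype.card {i // f i = a} = Fintype.card {i // g i = a} := by
  have := congrArg (Multiset.count a) h
  rw [Multiset.count_map, Multiset.count_map] at this
  simp [Fintype.card_subtype, Finset.filter_val, eq_comm] at this ⊢
  exact this

lemma aux_multiset_map_comp_perm {α : Type*} {n : ℕ} (g : Fin n → α) (σ : Equiv.Perm (Fin n)) :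
    Multiset.map (g ∘ σ) Finset.univ.val = Multiset.map g Finset.univ.val := by
  rw [← Multiset.map_map]
  congr 1
  have : Multiset.map (⇑σ) Finset.univ.val = (Finset.univ.map σ.toEmbedding).val := rfl
  rw [this, Finset.map_univ_equiv]

/-- The orbit invariant: a pair of bitstrings maps to the multiset of its per-coordinate
value pairs. -/
noncomputable def orbitMap (n : ℕ) (x y : Fin n → Fin 2) : Sym (Fin 2 × Fin 2) n :=
  ⟨Multiset.map (fun i => (x i, y i)) Finset.univ.val, by simp⟩

lemma orbitMap_surjective (n : ℕ) :
    Function.Surjective (fun p : (Fin n → Fin 2) × (Fin n → Fin 2) => orbitMap n p.1 p.2) := by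
  rintro ⟨m, hm⟩
  have hl : m.toList.length = n := by rw [Multiset.length_toList, hm]
  set l := m.toList with hldef
  refine ⟨(fun i => (l.get (Fin.cast hl.symm i)).1, fun i => (l.get (Fin.cast hl.symm i)).2), ?_⟩
  simp only [orbitMap]
  apply Subtype.ext
  show Multiset.map (fun i : Fin n => ((l.get (Fin.cast hl.symm i)).1,
    (l.get (Fin.cast hl.symm i)).2)) Finset.univ.val = m
  have key : Multiset.map (fun i : Fin n => l.get (Fin.cast hl.symm i)) Finset.univ.val
      = (l : Multiset _) := by
    subst hl
    have h1 : (Finset.univ.val : Multiset (Fin l.length))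
        = ((List.finRange l.length : List (Fin l.length)) : Multiset _) := rfl
    rw [h1, Multiset.map_coe]
    rw [show (fun i : Fin l.length => l.get (Fin.cast rfl i)) = l.get from rfl,
      List.map_get_finRange]
  calc Multiset.map (fun i : Fin n => ((l.get (Fin.cast hl.symm i)).1,
          (l.get (Fin.cast hl.symm i)).2)) Finset.univ.val
      = Multiset.map (fun i : Fin n => l.get (Fin.cast hl.symm i)) Finset.univ.val := by
        congr 1
    _ = (l : Multiset _) := key
    _ = m := by rw [hldef, Multiset.coe_toList]

/-- Membership in `gPI` is equivalent to invariance of entries under simultaneous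
permutation of the two indices. -/
lemma mem_gPI_iff (n : ℕ) (A : Matrix (Fin n → Fin 2) (Fin n → Fin 2) ℂ) :
    A ∈ gPI n ↔ ∀ (σ : Equiv.Perm (Fin n)) x y, A (x ∘ σ) (y ∘ σ) = A x y := by
  have hL : ∀ (π : Equiv.Perm (Fin n)) x y, (A * permUnitary n π) x y = A x (y ∘ π.symm) := by
    intro π x y
    rw [Matrix.mul_apply]
    have : ∀ z : Fin n → Fin 2, (y = z ∘ ⇑π) ↔ (z = y ∘ ⇑π.symm) := by
      intro z
      constructor <;> intro h <;> funext i <;> subst h <;> simp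
    simp only [permUnitary, Matrix.of_apply, this]
    simp
  have hR : ∀ (π : Equiv.Perm (Fin n)) x y, (permUnitary n π * A) x y = A (x ∘ π) y := by
    intro π x y
    rw [Matrix.mul_apply]
    simp [permUnitary, eq_comm]
  constructor
  · intro h σ x y
    have := congrFun (congrFun (h σ) x) (y ∘ σ)
    rw [hL, hR] at this
    have hy : (y ∘ ⇑σ) ∘ ⇑σ.symm = y := by funext i; simp
    rw [hy] at this
    exact this.symm
  · intro h π
    funext x y
    rw [hL, hR]
    have := h π x (y ∘ ⇑π.symm)
    have hy : (y ∘ ⇑π.symm) ∘ ⇑π = y := by funext i; simp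
    rw [hy] at this
    exact this.symm

/-- Matrices in `gPI` are constant on orbits. -/
lemma gPI_const_on_orbits {n : ℕ} {A : Matrix (Fin n → Fin 2) (Fin n → Fin 2) ℂ}
    (hA : A ∈ gPI n) {x y x' y' : Fin n → Fin 2}
    (h : orbitMap n x y = orbitMap n x' y') : A x y = A x' y' := by
  have hm : Multiset.map (fun i => (x i, y i)) Finset.univ.val
      = Multiset.map (fun i => (x' i, y' i)) Finset.univ.val := congrArg Subtype.val h
  obtain ⟨σ, hσ⟩ := aux_exists_perm_of_fiber_card (fun i => (x i, y i)) (fun i => (x' i, y' i))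
    (aux_fiber_card_of_multiset_eq _ _ hm)
  have hx : x = x' ∘ σ := by funext i; exact congrArg Prod.fst (congrFun hσ i)
  have hy : y = y' ∘ σ := by funext i; exact congrArg Prod.snd (congrFun hσ i)
  rw [hx, hy]
  exact (mem_gPI_iff n A).mp hA σ x' y'

/-- `gPI n` is linearly equivalent to functions on orbits. -/
noncomputable def gPIEquiv (n : ℕ) : (gPI n) ≃ₗ[ℂ] (Sym (Fin 2 × Fin 2) n → ℂ) where
  toFun A t := (A : Matrix (Fin n → Fin 2) (Fin n → Fin 2) ℂ)
    (Function.surjInv (orbitMap_surjective n) t).1 (Function.surjInv (orbitMap_surjective n) t).2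
  map_add' A B := rfl
  map_smul' c A := rfl
  invFun f := ⟨Matrix.of fun x y => f (orbitMap n x y), by
    rw [mem_gPI_iff]
    intro σ x y
    show f (orbitMap n (x ∘ σ) (y ∘ σ)) = f (orbitMap n x y)
    congr 1
    apply Subtype.ext
    exact aux_multiset_map_comp_perm (fun i => (x i, y i)) σ⟩
  left_inv A := by
    apply Subtype.ext
    funext x y
    show (A : Matrix (Fin n → Fin 2) (Fin n → Fin 2) ℂ) _ _ = _
    exact gPI_const_on_orbits A.2
      (Function.surjInv_eq (orbitMap_surjective n) (orbitMap n x y))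
  right_inv f := by
    funext t
    show f (orbitMap n _ _) = f t
    congr 1
    exact Function.surjInv_eq (orbitMap_surjective n) t

/-- The permutation-invariant algebra on `n ≥ 1` qubits has ℂ-dimension `C(n+3, 3)`. -/
theorem gPI_finrank (n : ℕ) (hn : 1 ≤ n) :
    Module.finrank ℂ (gPI n) = Nat.choose (n + 3) 3 := by
  rw [(gPIEquiv n).finrank_eq, Module.finrank_fintype_fun_eq_card,
    Sym.card_sym_eq_multichoose, Nat.multichoose_eq]
  have h4 : Fintype.card (Fin 2 × Fin 2) = 4 := by simp
  have h3 : 3 ≤ n + 3 := by omega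
  rw [h4, show 4 + n - 1 = n + 3 by omega, ← Nat.choose_symm h3, show n + 3 - 3 = n by omega]
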